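/- For any ε, α ∈ (0,1) and any β > 0, if G = (V,E) is a finite graph and 𝒫′ is a partition of V, then there exists an (ε,α,β)-good coarsening of 𝒫′. -/

import Mathlib

open scoped Classical

noncomputable section

namespace Paper

variable {V : Type} [Fintype V]

/-- The number of edges of `G` between the (disjoint) vertex sets `A` and `B`. -/
def eBetween (G : SimpleGraph V) (A B : Finset V) : ℕ :=
  ((A ×ˢ B).filter fun p => G.Adj p.1 p.2).card

/-- `Vs` is a partition of the vertex set into (nonempty) sets. -/
def IsPartition {k : ℕ} (Vs : Fin k → Finset V) : Prop :=
  (∀ v : V, ∃! i, v ∈ Vs i) ∧ ∀ i, (Vs i).Nonempty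

/-- The graph `H(𝒬,c)` on the parts of `𝒬`: `i` and `j` are joined iff
`|E(U_i,U_j)| > c`. -/
def partGraph (G : SimpleGraph V) {m : ℕ} (Us : Fin m → Finset V) (c : ℝ) :
    SimpleGraph (Fin m) :=
  SimpleGraph.fromRel fun i j => c < (eBetween G (Us i) (Us j) : ℝ)

/-- `Vs` is a coarsening of `Us`: every set of `Vs` is a union of sets of `Us`. -/
def IsCoarsening {k ℓ : ℕ} (Vs : Fin k → Finset V) (Us : Fin ℓ → Finset V) : Prop :=
  ∀ i, ∃ J : Finset (Fin ℓ), Vs i = J.biUnion Us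

/-- `Vs` is an `(ε,α,β)`-good coarsening of the partition `Us` (with `ℓ` parts):
it is a partition, a coarsening of `Us`, and there exists
`θ ∈ [ε(εα/ℓ²)^(2^ℓ), ε]` such that (1) for every part `V_i` the graph `H(𝒫_i, θβ)` on
the parts of `Us` contained in `V_i` is connected, and (2) `|E(V_i, V∖V_i)| ≤ θ²βα`. -/
def IsGoodCoarsening [DecidableEq V] (G : SimpleGraph V) (ε α β : ℝ) {k ℓ : ℕ}
    (Us : Fin ℓ → Finset V) (Vs : Fin k → Finset V) : Prop :=
  IsPartition Vs ∧ IsCoarsening Vs Us ∧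
  ∃ θ : ℝ, ε * (ε * α / (ℓ : ℝ) ^ 2) ^ (2 ^ ℓ : ℕ) ≤ θ ∧ θ ≤ ε ∧
    (∀ i, ((partGraph G Us (θ * β)).induce {j | Us j ⊆ Vs i}).Connected) ∧
    (∀ i, (eBetween G (Vs i) (Vs i)ᶜ : ℝ) ≤ θ ^ 2 * β * α)

/-! ### Auxiliary lemmas -/

lemma eBetween_mono_right (G : SimpleGraph V) {A B B' : Finset V} (h : B ⊆ B') :
    eBetween G A B ≤ eBetween G A B' :=
  Finset.card_le_card (Finset.filter_subset_filter _
    (Finset.product_subset_product (Finset.Subset.refl A) h))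

lemma eBetween_biUnion_le_right [DecidableEq V] (G : SimpleGraph V) (A : Finset V) {ι : Type*}
    (J : Finset ι) (Us : ι → Finset V) :
    eBetween G A (J.biUnion Us) ≤ ∑ j ∈ J, eBetween G A (Us j) := by
  classical
  calc eBetween G A (J.biUnion Us)
      ≤ (J.biUnion fun j => (A ×ˢ Us j).filter fun p => G.Adj p.1 p.2).card := by
        apply Finset.card_le_card
        intro p hp
        simp only [Finset.mem_filter, Finset.mem_product, Finset.mem_biUnion] at hp ⊢
        obtain ⟨⟨h1, j, hj, h2⟩, h3⟩ := hp
        exact ⟨j, hj, ⟨h1, h2⟩, h3⟩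
    _ ≤ ∑ j ∈ J, eBetween G A (Us j) := Finset.card_biUnion_le

lemma eBetween_biUnion_le_left [DecidableEq V] (G : SimpleGraph V) (B : Finset V) {ι : Type*}
    (J : Finset ι) (Us : ι → Finset V) :
    eBetween G (J.biUnion Us) B ≤ ∑ j ∈ J, eBetween G (Us j) B := by
  classical
  calc eBetween G (J.biUnion Us) B
      ≤ (J.biUnion fun j => (Us j ×ˢ B).filter fun p => G.Adj p.1 p.2).card := by
        apply Finset.card_le_card
        intro p hp
        simp only [Finset.mem_filter, Finset.mem_product, Finset.mem_biUnion] at hp ⊢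
        obtain ⟨⟨⟨j, hj, h1⟩, h2⟩, h3⟩ := hp
        exact ⟨j, hj, ⟨h1, h2⟩, h3⟩
    _ ≤ ∑ j ∈ J, eBetween G (Us j) B := Finset.card_biUnion_le

/-- The induced subgraph on a connected component is connected. -/
lemma connected_induce_component {W : Type*} (H : SimpleGraph W) (C : H.ConnectedComponent) :
    (H.induce {v | H.connectedComponentMk v = C}).Connected := by
  obtain ⟨u, rfl⟩ := C.exists_rep
  refine H.induce_connected_of_patches
      (s := {v | H.connectedComponentMk v = Quot.mk H.Reachable u}) u rfl ?_
  intro v hv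
  have hr : H.Reachable u v := (SimpleGraph.ConnectedComponent.eq.mp hv).symm
  obtain ⟨p⟩ := hr
  refine ⟨{x | x ∈ p.support}, ?_, p.start_mem_support, p.end_mem_support, ?_⟩
  · intro x hx
    have : H.Reachable u x := ⟨p.takeUntil x hx⟩
    exact (SimpleGraph.ConnectedComponent.sound this).symm
  · exact (p.connected_induce_support).preconnected _ _

/-- The sequence `θ₀ = ε`, `θ_{t+1} = θ_t² α / L²`. -/
def thSeq (ε α L : ℝ) : ℕ → ℝ
  | 0 => ε
  | t + 1 => (thSeq ε α L t) ^ 2 * α / L ^ 2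

set_option maxHeartbeats 400000 in
/-- **Lemma 2.12.**  For any `ε, α ∈ (0,1)` and `β > 0`, every partition `𝒫'` of the
vertex set of a finite graph admits an `(ε,α,β)`-good coarsening. -/
theorem exists_good_coarsening [DecidableEq V] (ε α β : ℝ)
    (hε : ε ∈ Set.Ioo (0 : ℝ) 1) (hα : α ∈ Set.Ioo (0 : ℝ) 1) (hβ : 0 < β)
    (G : SimpleGraph V) {ℓ : ℕ} (Us : Fin ℓ → Finset V) (hUs : IsPartition Us) :
    ∃ (k : ℕ) (Vs : Fin k → Finset V), IsGoodCoarsening G ε α β Us Vs := by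
  obtain ⟨hε0, hε1⟩ := hε
  obtain ⟨hα0, hα1⟩ := hα
  rcases Nat.eq_zero_or_pos ℓ with hl0 | hlpos
  · -- degenerate case: no parts, so `V` is empty
    subst hl0
    haveI : IsEmpty V := ⟨fun v => ((hUs.1 v).exists.choose).elim0⟩
    refine ⟨0, Fin.elim0, ⟨fun v => isEmptyElim v, fun i => i.elim0⟩, fun i => i.elim0,
      ε, ?_, le_refl ε, fun i => i.elim0, fun i => i.elim0⟩
    norm_num
    positivity
  -- main case: `ℓ ≥ 1`
  set L : ℝ := (ℓ : ℝ) with hL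
  have hL1 : (1 : ℝ) ≤ L := by exact_mod_cast Nat.one_le_cast.mpr hlpos
  have hL0 : (0 : ℝ) < L := lt_of_lt_of_le one_pos hL1
  set r : ℝ := ε * α / L ^ 2 with hr
  have hr0 : 0 < r := by positivity
  have hr1 : r < 1 := by
    rw [hr, div_lt_one (by positivity)]
    nlinarith
  set th : ℕ → ℝ := thSeq ε α L with hth
  have hth0 : th 0 = ε := rfl
  have hthS : ∀ t, th (t + 1) = th t ^ 2 * α / L ^ 2 := fun t => rfl
  have hpos : ∀ t, 0 < th t := by
    intro t; induction t with
    | zero => exact hε0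
    | succ n ih => rw [hthS]; positivity
  have hle : ∀ t, th t ≤ ε := by
    intro t; induction t with
    | zero => exact le_refl ε
    | succ n ih =>
      rw [hthS, div_le_iff₀ (by positivity)]
      have hsq : th n ^ 2 ≤ ε ^ 2 := by nlinarith [hpos n]
      have hL2 : (1 : ℝ) ≤ L ^ 2 := by nlinarith
      nlinarith [hsq, hL2, hα1, hε0, hα0, sq_nonneg ε]
  have hmono : ∀ t, th (t + 1) ≤ th t := by
    intro t
    rw [hthS, div_le_iff₀ (by positivity)]
    have h1 : th t ≤ 1 := (hle t).trans hε1.le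
    have hL2 : (1 : ℝ) ≤ L ^ 2 := by nlinarith
    nlinarith [hpos t, h1, hL2, hα1, hα0]
  have hlow : ∀ t, ε * r ^ (2 ^ t - 1) ≤ th t := by
    intro t; induction t with
    | zero => simp [hth0]
    | succ n ih =>
      rw [hthS]
      have hm : 2 ^ (n + 1) - 1 = (2 ^ n - 1) + (2 ^ n - 1) + 1 := by
        have : 0 < 2 ^ n := pow_pos (by norm_num) n
        omega
      have heq : ε * r ^ (2 ^ (n + 1) - 1) = (ε * r ^ (2 ^ n - 1)) ^ 2 * α / L ^ 2 := by
        rw [hm, pow_add, pow_add, pow_one, hr]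
        field_simp
        try ring
      rw [heq]
      gcongr
      try exact ih
  -- the graphs at each threshold, and monotonicity
  set Ht : ℕ → SimpleGraph (Fin ℓ) := fun t => partGraph G Us (th t * β) with hHt
  have hHmono : ∀ t, Ht t ≤ Ht (t + 1) := by
    intro t a b hab
    have hc : th (t + 1) * β ≤ th t * β := mul_le_mul_of_nonneg_right (hmono t) hβ.le
    simp only [hHt, partGraph, SimpleGraph.fromRel_adj] at hab ⊢
    exact ⟨hab.1, hab.2.imp (fun h => lt_of_le_of_lt hc h) (fun h => lt_of_le_of_lt hc h)⟩
  have hsurj : ∀ t, Function.Surjective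
      (SimpleGraph.ConnectedComponent.map (SimpleGraph.Hom.ofLE (hHmono t))) := by
    intro t C
    obtain ⟨v, rfl⟩ := C.exists_rep
    exact ⟨(Ht t).connectedComponentMk v, rfl⟩
  set c : ℕ → ℕ := fun t => Fintype.card ((Ht t).ConnectedComponent) with hc
  haveI : Nonempty (Fin ℓ) := ⟨⟨0, hlpos⟩⟩
  -- find a level where the component structure stabilises
  have key : ∃ T, T ≤ ℓ ∧ c (T + 1) = c T := by
    by_contra hcon
    push_neg at hcon
    have hstep : ∀ t ≤ ℓ, c (t + 1) + 1 ≤ c t := fun t ht =>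
      Nat.lt_of_le_of_ne (Fintype.card_le_of_surjective _ (hsurj t)) (hcon t ht)
    have hsum : ∀ t, t ≤ ℓ + 1 → c t + t ≤ c 0 := by
      intro t
      induction t with
      | zero => simp
      | succ n ih =>
        intro hn
        have h1 := hstep n (by omega)
        have h2 := ih (by omega)
        omega
    have h0 : c 0 ≤ ℓ := by
      have := Fintype.card_le_of_surjective ((Ht 0).connectedComponentMk)
        (fun C => C.exists_rep)
      simpa using this
    haveI : Nonempty ((Ht (ℓ + 1)).ConnectedComponent) :=
      ⟨(Ht (ℓ + 1)).connectedComponentMk ⟨0, hlpos⟩⟩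
    have h1 : 0 < c (ℓ + 1) := Fintype.card_pos
    have := hsum (ℓ + 1) (le_refl _)
    omega
  obtain ⟨T, hTle, hcard⟩ := key
  have hbij : Function.Bijective
      (SimpleGraph.ConnectedComponent.map (SimpleGraph.Hom.ofLE (hHmono T))) :=
    (Fintype.bijective_iff_surjective_and_card _).mpr ⟨hsurj T, hcard.symm⟩
  -- reachability at level T+1 implies reachability at level T
  have hreach : ∀ a b : Fin ℓ, (Ht (T + 1)).Reachable a b → (Ht T).Reachable a b := by
    intro a b h
    have h2 : (SimpleGraph.ConnectedComponent.map
        (SimpleGraph.Hom.ofLE (hHmono T)) ((Ht T).connectedComponentMk a))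
        = (SimpleGraph.ConnectedComponent.map
        (SimpleGraph.Hom.ofLE (hHmono T)) ((Ht T).connectedComponentMk b)) := by
      simp only [SimpleGraph.ConnectedComponent.map_mk, SimpleGraph.Hom.ofLE_apply]
      exact SimpleGraph.ConnectedComponent.sound h
    exact SimpleGraph.ConnectedComponent.exact (hbij.1 h2)
  -- the coarsening: connected components of `Ht T`
  set H : SimpleGraph (Fin ℓ) := Ht T with hH
  set k : ℕ := Fintype.card H.ConnectedComponent with hk
  set e : Fin k ≃ H.ConnectedComponent := (Fintype.equivFin H.ConnectedComponent).symm with he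
  set Jf : Fin k → Finset (Fin ℓ) :=
    fun i => Finset.univ.filter fun j => H.connectedComponentMk j = e i with hJf
  set Vs : Fin k → Finset V := fun i => (Jf i).biUnion Us with hVs
  have mem_Jf : ∀ i j, j ∈ Jf i ↔ H.connectedComponentMk j = e i := by
    intro i j
    rw [hJf]
    simp
  -- the unique part containing each vertex
  have hexu := hUs.1
  set jv : V → Fin ℓ := fun v => (hexu v).exists.choose with hjv
  have hjmem : ∀ v, v ∈ Us (jv v) := fun v => (hexu v).exists.choose_spec
  have hjuniq : ∀ v j, v ∈ Us j → j = jv v := by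
    intro v j hj
    exact ((hexu v).unique hj (hjmem v))
  have mem_Vs : ∀ i v, v ∈ Vs i ↔ H.connectedComponentMk (jv v) = e i := by
    intro i v
    rw [hVs]
    simp only [Finset.mem_biUnion]
    constructor
    · rintro ⟨j, hj1, hj2⟩
      rw [hjuniq v j hj2] at hj1
      exact (mem_Jf i (jv v)).mp hj1
    · intro h
      exact ⟨jv v, (mem_Jf i (jv v)).mpr h, hjmem v⟩
  refine ⟨k, Vs, ?_, ?_, th T, ?_, hle T, ?_, ?_⟩
  · -- IsPartition
    constructor
    · intro v
      refine ⟨e.symm (H.connectedComponentMk (jv v)), (mem_Vs _ v).mpr (by simp), ?_⟩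
      intro i' hi'
      have h2 := (mem_Vs i' v).mp hi'
      rw [h2]
      simp
    · intro i
      obtain ⟨j0, hj0⟩ := (e i).exists_rep
      obtain ⟨v, hv⟩ := hUs.2 j0
      refine ⟨v, (mem_Vs i v).mpr ?_⟩
      rw [← hjuniq v j0 hv]
      exact hj0
  · -- IsCoarsening
    intro i
    refine ⟨Jf i, ?_⟩
    ext v
    rw [hVs]
    simp [Finset.mem_biUnion]
  · -- lower bound on θ
    calc ε * (ε * α / (ℓ : ℝ) ^ 2) ^ (2 ^ ℓ : ℕ) = ε * r ^ (2 ^ ℓ : ℕ) := by rw [hr, hL]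
      _ ≤ ε * r ^ (2 ^ T - 1) := by
          apply mul_le_mul_of_nonneg_left _ hε0.le
          apply pow_le_pow_of_le_one hr0.le hr1.le
          have h2 : 2 ^ T ≤ 2 ^ ℓ := Nat.pow_le_pow_right (by norm_num) hTle
          have h3 : 0 < 2 ^ T := pow_pos (by norm_num) T
          omega
      _ ≤ th T := hlow T
  · -- condition (1): connectivity of the induced part-graphs
    intro i
    have hset : {j | Us j ⊆ Vs i} = {j | H.connectedComponentMk j = e i} := by
      ext j
      simp only [Set.mem_setOf_eq]
      constructor
      · intro hsub
        obtain ⟨v, hv⟩ := hUs.2 j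
        have := (mem_Vs i v).mp (hsub hv)
        rw [hjuniq v j hv]
        exact this
      · intro hj v hv
        refine (mem_Vs i v).mpr ?_
        rw [← hjuniq v j hv]
        exact hj
    rw [hset]
    exact connected_induce_component H (e i)
  · -- condition (2): few edges leave each part
    intro i
    have hcompl : (Vs i)ᶜ ⊆ (Jf i)ᶜ.biUnion Us := by
      intro v hv
      rw [Finset.mem_compl] at hv
      have h1 : H.connectedComponentMk (jv v) ≠ e i := fun h => hv ((mem_Vs i v).mpr h)
      refine Finset.mem_biUnion.mpr ⟨jv v, ?_, hjmem v⟩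
      rw [Finset.mem_compl]
      intro hmem
      exact h1 ((mem_Jf i (jv v)).mp hmem)
    have hterm : ∀ j ∈ Jf i, ∀ j' ∈ (Jf i)ᶜ,
        (eBetween G (Us j) (Us j') : ℝ) ≤ th (T + 1) * β := by
      intro j hj j' hj'
      have hj1 : H.connectedComponentMk j = e i := (mem_Jf i j).mp hj
      have hj2 : H.connectedComponentMk j' ≠ e i := by
        rw [Finset.mem_compl] at hj'
        intro h
        exact hj' ((mem_Jf i j').mpr h)
      have hne : j ≠ j' := fun h => hj2 (h ▸ hj1)
      have hnr : ¬ (Ht T).Reachable j j' := by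
        intro h
        exact hj2 ((SimpleGraph.ConnectedComponent.sound h).symm.trans hj1)
      have hnadj : ¬ (Ht (T + 1)).Adj j j' := fun h => hnr (hreach j j' h.reachable)
      simp only [hHt, partGraph, SimpleGraph.fromRel_adj, not_and_or, not_or, not_lt] at hnadj
      rcases hnadj with h | h
      · exact absurd hne (by simpa using h)
      · exact h.1
    have hnat : eBetween G (Vs i) (Vs i)ᶜ
        ≤ ∑ j ∈ Jf i, ∑ j' ∈ (Jf i)ᶜ, eBetween G (Us j) (Us j') := by
      have s1 : eBetween G (Vs i) (Vs i)ᶜ ≤ eBetween G (Vs i) ((Jf i)ᶜ.biUnion Us) :=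
        eBetween_mono_right G hcompl
      have s2 : eBetween G (Vs i) ((Jf i)ᶜ.biUnion Us)
          = eBetween G ((Jf i).biUnion Us) ((Jf i)ᶜ.biUnion Us) := by rw [hVs]
      have s3 : eBetween G ((Jf i).biUnion Us) ((Jf i)ᶜ.biUnion Us)
          ≤ ∑ j ∈ Jf i, eBetween G (Us j) ((Jf i)ᶜ.biUnion Us) :=
        eBetween_biUnion_le_left G ((Jf i)ᶜ.biUnion Us) (Jf i) Us
      have s4 : ∑ j ∈ Jf i, eBetween G (Us j) ((Jf i)ᶜ.biUnion Us)
          ≤ ∑ j ∈ Jf i, ∑ j' ∈ (Jf i)ᶜ, eBetween G (Us j) (Us j') :=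
        Finset.sum_le_sum fun j _ => eBetween_biUnion_le_right G (Us j) ((Jf i)ᶜ) Us
      omega
    have hT1 : 0 ≤ th (T + 1) * β := mul_nonneg (hpos (T + 1)).le hβ.le
    have hsumbound : (eBetween G (Vs i) (Vs i)ᶜ : ℝ)
        ≤ ((Jf i).card : ℝ) * (((Jf i)ᶜ.card : ℝ)) * (th (T + 1) * β) := by
      calc (eBetween G (Vs i) (Vs i)ᶜ : ℝ)
          ≤ ((∑ j ∈ Jf i, ∑ j' ∈ (Jf i)ᶜ, eBetween G (Us j) (Us j') : ℕ) : ℝ) := by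
            exact_mod_cast hnat
        _ = ∑ j ∈ Jf i, ∑ j' ∈ (Jf i)ᶜ, (eBetween G (Us j) (Us j') : ℝ) := by push_cast; ring
        _ ≤ ∑ j ∈ Jf i, ∑ _j' ∈ (Jf i)ᶜ, (th (T + 1) * β) := by
            apply Finset.sum_le_sum
            intro j hj
            exact Finset.sum_le_sum fun j' hj' => hterm j hj j' hj'
        _ = ((Jf i).card : ℝ) * (((Jf i)ᶜ.card : ℝ) * (th (T + 1) * β)) := by
            simp [Finset.sum_const, nsmul_eq_mul, mul_assoc]
        _ = ((Jf i).card : ℝ) * (((Jf i)ᶜ.card : ℝ)) * (th (T + 1) * β) := by ring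
    have hJcard : ((Jf i).card : ℝ) ≤ L := by
      rw [hL]
      exact_mod_cast (Finset.card_le_univ _).trans_eq (Finset.card_fin ℓ)
    have hJ'card : (((Jf i)ᶜ.card : ℝ)) ≤ L := by
      rw [hL]
      exact_mod_cast (Finset.card_le_univ _).trans_eq (Finset.card_fin ℓ)
    have hfin : ((Jf i).card : ℝ) * (((Jf i)ᶜ.card : ℝ)) * (th (T + 1) * β)
        ≤ L ^ 2 * (th (T + 1) * β) := by
      have h4 : ((Jf i).card : ℝ) * (((Jf i)ᶜ.card : ℝ)) ≤ L * L :=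
        mul_le_mul hJcard hJ'card (Nat.cast_nonneg _) hL0.le
      nlinarith [hT1]
    have heqfin : L ^ 2 * (th (T + 1) * β) = th T ^ 2 * β * α := by
      rw [hthS T]
      field_simp
    linarith [hsumbound, hfin]

end Paper
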